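/- Let G be a matrix Lie group with Lie algebra 𝔤 satisfying the Lohe closure property (Z - Z⁻¹ ∈ 𝔤 for all Z ∈ G). Then for any Y, Z ∈ G and Q ∈ 𝔤, the matrix Y·Q·Z + Z⁻¹·Q·Y⁻¹ lies in 𝔤. -/

import Mathlib

open Matrix

attribute [local instance] Matrix.linftyOpNormedRing Matrix.linftyOpNormedAlgebra

/-- Infinitesimal Lohe property: if a closed matrix group `G` satisfies the
Lohe closure property (`Z - Z⁻¹` lies in the Lie algebra `𝔤` of `G` for all `Z ∈ G`),
then for any `Y, Z ∈ G` and `Q ∈ 𝔤`, the matrix `Y⬝Q⬝Z + Z⁻¹⬝Q⬝Y⁻¹` lies in `𝔤`.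
Here `𝔤 = {Q | ∀ t : ℝ, exp(tQ) ∈ G}` is the Lie algebra of `G`. -/
theorem lohe_infinitesimal {d : ℕ} (G : Set (Matrix (Fin d) (Fin d) ℂ))
    (hGclosed : IsClosed G)
    (hGone : (1 : Matrix (Fin d) (Fin d) ℂ) ∈ G)
    (hGmul : ∀ X ∈ G, ∀ Y ∈ G, X * Y ∈ G)
    (hGunit : ∀ X ∈ G, IsUnit X)
    (hGinv : ∀ X ∈ G, X⁻¹ ∈ G)
    (g : Set (Matrix (Fin d) (Fin d) ℂ))
    (hg : g = {Q : Matrix (Fin d) (Fin d) ℂ |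
      ∀ t : ℝ, NormedSpace.exp ((t : ℂ) • Q) ∈ G})
    (hLohe : ∀ Z ∈ G, Z - Z⁻¹ ∈ g)
    (Y Z Q : Matrix (Fin d) (Fin d) ℂ)
    (hY : Y ∈ G) (hZ : Z ∈ G) (hQ : Q ∈ g) :
    Y * Q * Z + Z⁻¹ * Q * Y⁻¹ ∈ g := by
  -- rephrase the Lie algebra using the real exponential
  have hexp : ∀ (t : ℝ) (M : Matrix (Fin d) (Fin d) ℂ),
      NormedSpace.exp ((t : ℂ) • M) = NormedSpace.exp (t • M) := by
    intro t M
    rw [Complex.coe_smul]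
  have hg' : ∀ M, M ∈ g ↔ ∀ t : ℝ, NormedSpace.exp (t • M) ∈ G := by
    intro M
    simp only [hg, Set.mem_setOf_eq, hexp]
  -- g is closed under real scalar multiplication
  have hsmul : ∀ (c : ℝ) (P), P ∈ g → c • P ∈ g := by
    intro c P hP
    rw [hg'] at hP ⊢
    intro t
    rw [smul_smul]
    exact hP (t * c)
  -- g is topologically closed
  have hclosed : IsClosed g := by
    have : g = ⋂ t : ℝ, (fun M => NormedSpace.exp (t • M)) ⁻¹' G := by
      ext M; simp [hg', Set.mem_iInter]
    rw [this]
    exact isClosed_iInter fun t =>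
      hGclosed.preimage (NormedSpace.exp_continuous.comp (continuous_const_smul t))
  -- key limiting lemma: derivatives at 0 of curves in g vanishing at 0 lie in g
  have key : ∀ (F : ℝ → Matrix (Fin d) (Fin d) ℂ) (D),
      (∀ u, F u ∈ g) → F 0 = 0 → HasDerivAt F D 0 → D ∈ g := by
    intro F D hFg hF0 hFD
    have hslope : Filter.Tendsto (slope F 0) (nhdsWithin 0 {(0:ℝ)}ᶜ) (nhds D) :=
      hasDerivAt_iff_tendsto_slope.mp hFD
    refine hclosed.mem_of_tendsto hslope ?_
    filter_upwards [self_mem_nhdsWithin] with u hu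
    have : slope F 0 u = (u - 0)⁻¹ • (F u - F 0) := rfl
    rw [this, hF0, sub_zero, sub_zero]
    exact hsmul _ _ (hFg u)
  -- closure under negation
  have hneg : ∀ P, P ∈ g → -P ∈ g := by
    intro P hP
    have := hsmul (-1) P hP
    rwa [neg_one_smul] at this
  -- exponentials of elements of g lie in G
  have hexpG : ∀ P, P ∈ g → ∀ u : ℝ, NormedSpace.exp (u • P) ∈ G := fun P hP => (hg' P).mp hP
  -- derivative of u ↦ exp (u • P) at 0 is P
  have hder : ∀ P : Matrix (Fin d) (Fin d) ℂ,
      HasDerivAt (fun u : ℝ => NormedSpace.exp (u • P)) P 0 := by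
    intro P
    have := hasDerivAt_exp_smul_const (𝕂 := ℝ) P (0 : ℝ)
    simp at this; exact this
  -- inverse of exp
  have hinv : ∀ (P : Matrix (Fin d) (Fin d) ℂ) (u : ℝ),
      (NormedSpace.exp (u • P))⁻¹ = NormedSpace.exp (u • (-P)) := by
    intro P u
    rw [smul_neg]
    exact (Matrix.exp_neg (u • P)).symm
  -- closure under addition
  have hadd : ∀ P, P ∈ g → ∀ R, R ∈ g → P + R ∈ g := by
    intro P hP R hR
    set F : ℝ → Matrix (Fin d) (Fin d) ℂ := fun u =>
      NormedSpace.exp (u • P) * NormedSpace.exp (u • R) -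
        NormedSpace.exp (u • (-R)) * NormedSpace.exp (u • (-P)) with hF
    have hFg : ∀ u, F u ∈ g := by
      intro u
      have hXG : NormedSpace.exp (u • P) * NormedSpace.exp (u • R) ∈ G :=
        hGmul _ (hexpG P hP u) _ (hexpG R hR u)
      have := hLohe _ hXG
      rwa [Matrix.mul_inv_rev, hinv, hinv] at this
    have hF0 : F 0 = 0 := by simp [hF]
    have hFD : HasDerivAt F ((2:ℝ) • (P + R)) 0 := by
      have h1 := ((hder P).mul (hder R)).sub ((hder (-R)).mul (hder (-P)))
      have e : P * NormedSpace.exp ((0:ℝ) • R) + NormedSpace.exp ((0:ℝ) • P) * R -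
          (-R * NormedSpace.exp ((0:ℝ) • (-P)) +
            NormedSpace.exp ((0:ℝ) • (-R)) * -P) = (2:ℝ) • (P + R) := by
        simp [two_smul]
        abel
      rw [← e]
      exact h1
    have h2 := key F _ hFg hF0 hFD
    have := hsmul 2⁻¹ _ h2
    rwa [smul_smul, inv_mul_cancel₀ (two_ne_zero), one_smul] at this
  -- subtraction closure
  have hsub : ∀ P, P ∈ g → ∀ R, R ∈ g → P - R ∈ g := by
    intro P hP R hR
    have := hadd P hP (-R) (hneg R hR)
    rwa [← sub_eq_add_neg] at this
  -- the main curve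
  set B : ℝ → Matrix (Fin d) (Fin d) ℂ := fun u =>
    Y * NormedSpace.exp (u • Q) * Z - Z⁻¹ * (NormedSpace.exp (u • (-Q)) * Y⁻¹) with hB
  have hBg : ∀ u, B u ∈ g := by
    intro u
    have hWG : Y * NormedSpace.exp (u • Q) * Z ∈ G :=
      hGmul _ (hGmul _ hY _ (hexpG Q hQ u)) _ hZ
    have := hLohe _ hWG
    rwa [Matrix.mul_inv_rev, Matrix.mul_inv_rev, hinv] at this
  set F : ℝ → Matrix (Fin d) (Fin d) ℂ := fun u => B u - B 0 with hF
  have hFg : ∀ u, F u ∈ g := fun u => hsub _ (hBg u) _ (hBg 0)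
  have hF0 : F 0 = 0 := sub_self _
  have hFD : HasDerivAt F (Y * Q * Z + Z⁻¹ * Q * Y⁻¹) 0 := by
    have h1 : HasDerivAt (fun u : ℝ => Y * NormedSpace.exp (u • Q) * Z) (Y * Q * Z) 0 := by
      have := (((hder Q).const_mul Y).mul_const Z)
      exact this
    have h2 : HasDerivAt (fun u : ℝ => Z⁻¹ * (NormedSpace.exp (u • (-Q)) * Y⁻¹))
        (Z⁻¹ * (-Q * Y⁻¹)) 0 := by
      have := (((hder (-Q)).mul_const Y⁻¹).const_mul Z⁻¹)
      simp at this ⊢; exact this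
    have h3 := (h1.sub h2).sub_const (B 0)
    have e : Y * Q * Z - Z⁻¹ * (-Q * Y⁻¹) = Y * Q * Z + Z⁻¹ * Q * Y⁻¹ := by
      simp [mul_assoc, neg_mul, mul_neg, sub_neg_eq_add]
    rwa [e] at h3
  exact key F _ hFg hF0 hFD
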